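/- arXiv:math/0312273 — 2 statements merged into one kernel-verified Lean document; each statement's English description precedes it below -/
import Mathlib

section
/- (Springer) Let φ be an anisotropic quadratic form over a field F of characteristic ≠ 2, and let X be the associated projective quadric. If X has a closed point x of odd degree [F(x):F], then φ is isotropic over F, a contradiction; equivalently, an anisotropic quadratic form remains anisotropic over every finite field extension of odd degree. -/
open TensorProduct

/-- The hyperbolic form `⟨1,-1⟩ ⊥ ... ⊥ ⟨1,-1⟩` (`k` hyperbolic planes). -/
noncomputable def hypForm (F : Type*) [Field F] (k : ℕ) : QuadraticForm F (Fin (2*k) → F) :=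
  QuadraticMap.weightedSumSquares F (fun i : Fin (2*k) => (-1 : F) ^ (i : ℕ))

/-- Witt equivalence of two quadratic forms over `F`: they become isometric after adding
suitable numbers of hyperbolic planes. -/
def WittEquiv {F : Type*} [Field F] {V W : Type*} [AddCommGroup V] [Module F V]
    [AddCommGroup W] [Module F W] (φ : QuadraticForm F V) (ψ : QuadraticForm F W) : Prop :=
  ∃ k l : ℕ, (φ.prod (hypForm F k)).Equivalent (ψ.prod (hypForm F l))

/-- An orthogonal sum of scaled `n`-fold Pfister forms
`c 1 • ⟪⟪a 1 1, …, a 1 n⟫⟫ ⊥ … ⊥ c k • ⟪⟪a k 1, …, a k n⟫⟫`, realized as the diagonal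
quadratic form whose entries, indexed by a pair `(j, s)` with `s ⊆ {1,…,n}`, are
`c j * ∏_{i ∈ s} (-(a j i))`. -/
noncomputable def pfisterScaledSum {F : Type*} [Field F] {k n : ℕ}
    (c : Fin k → F) (a : Fin k → Fin n → F) :
    QuadraticForm F ((Fin k × Finset (Fin n)) → F) :=
  QuadraticMap.weightedSumSquares F
    (fun p : Fin k × Finset (Fin n) => c p.1 * ∏ i ∈ p.2, (-(a p.1 i)))

/-- The Witt class of `φ` lies in the `n`-th power `I(F)^n` of the fundamental ideal of the
Witt ring: equivalently, `φ` is Witt equivalent to an orthogonal sum of quadratic forms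
`c_j • ⟪⟪a_{j1}, …, a_{jn}⟫⟫`, each a nonzero scalar multiple of an `n`-fold Pfister form
(such sums additively generate `I(F)^n`). -/
def MemPowFundIdeal {F : Type*} [Field F] (n : ℕ) {V : Type*} [AddCommGroup V] [Module F V]
    (φ : QuadraticForm F V) : Prop :=
  ∃ (k : ℕ) (c : Fin k → F) (a : Fin k → Fin n → F),
    (∀ j, c j ≠ 0) ∧ (∀ j i, a j i ≠ 0) ∧ WittEquiv φ (pfisterScaledSum c a)

/-- The splitting pattern of `φ`: the set of natural numbers `m` such that, over some field
extension `E/F`, the anisotropic part of `φ_E` has dimension `m`. -/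
def splittingPattern {F : Type u} [Field F] [Invertible (2 : F)] {V : Type u} [AddCommGroup V]
    [Module F V] (φ : QuadraticForm F V) : Set ℕ :=
  {m | ∃ (E : Type u) (_ : Field E) (_ : Algebra F E) (l : ℕ)
        (ψ : QuadraticForm E (Fin m → E)), ψ.Anisotropic ∧
          (φ.baseChange E).Equivalent (ψ.prod (hypForm E l))}




open TensorProduct Polynomial

section Springer

variable {F V : Type*} [Field F] [AddCommGroup V] [Module F V]

/-- `AdjoinRoot.mk` as an `F`-algebra homomorphism. -/
noncomputable def springerMkAlg (p : F[X]) : F[X] →ₐ[F] AdjoinRoot p :=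
  ⟨AdjoinRoot.mk p, fun _ => rfl⟩

@[simp] theorem springerMkAlg_apply (p g : F[X]) : springerMkAlg p g = AdjoinRoot.mk p g := rfl

/-- The `n`-th coefficient map `F[X] ⊗ V → V`. -/
noncomputable def springerCoeffT (F V : Type*) [Field F] [AddCommGroup V] [Module F V] (n : ℕ) :
    (Polynomial F) ⊗[F] V →ₗ[F] V :=
  (TensorProduct.lid F V).toLinearMap ∘ₗ (Polynomial.lcoeff F n).rTensor V

@[simp] theorem springerCoeffT_tmul (n : ℕ) (g : Polynomial F) (v : V) :
    springerCoeffT F V n (g ⊗ₜ v) = g.coeff n • v := by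
  simp [springerCoeffT]

section Bilin

variable {A B : Type*} [CommRing A] [CommRing B] [Algebra F A] [Algebra F B]

theorem springer_bilin_nat (B₀ : LinearMap.BilinForm F V) (f : A →ₐ[F] B) (x y : A ⊗[F] V) :
    (B₀.baseChange B) (f.toLinearMap.rTensor V x) (f.toLinearMap.rTensor V y)
      = f ((B₀.baseChange A) x y) := by
  induction x with
  | zero => simp
  | add x₁ x₂ h₁ h₂ => simp [map_add, h₁, h₂]
  | tmul a v =>
    induction y with
    | zero => simp
    | add y₁ y₂ h₁ h₂ =>
      simp only [LinearMap.rTensor_tmul, AlgHom.toLinearMap_apply] at h₁ h₂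
      simp [map_add, h₁, h₂]
    | tmul a' v' =>
      simp only [LinearMap.rTensor_tmul, AlgHom.toLinearMap_apply,
        LinearMap.BilinForm.baseChange_tmul, map_smul, map_mul]

variable [Invertible (2 : F)]

theorem springer_quad_nat (φ : QuadraticForm F V) (f : A →ₐ[F] B) (x : A ⊗[F] V) :
    φ.baseChange B (f.toLinearMap.rTensor V x) = f (φ.baseChange A x) := by
  letI : Invertible (2 : A) := (Invertible.map (algebraMap F A) 2).copy 2 (map_ofNat _ _).symm
  letI : Invertible (2 : B) := (Invertible.map (algebraMap F B) 2).copy 2 (map_ofNat _ _).symm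
  have h1 := QuadraticMap.associated_eq_self_apply B (φ.baseChange B)
    (f.toLinearMap.rTensor V x)
  have h2 := QuadraticMap.associated_eq_self_apply A (φ.baseChange A) x
  rw [← h1, ← h2, QuadraticForm.associated_baseChange, QuadraticForm.associated_baseChange]
  exact springer_bilin_nat _ f x x

theorem springer_anisotropic_congr (φ : QuadraticForm F V) (e : A ≃ₐ[F] B)
    (h : (φ.baseChange A).Anisotropic) : (φ.baseChange B).Anisotropic := by
  intro y hy
  set x := (e.symm.toAlgHom.toLinearMap.rTensor V) y with hx
  have hxy : (e.toAlgHom.toLinearMap.rTensor V) x = y := by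
    rw [hx, ← LinearMap.comp_apply, ← LinearMap.rTensor_comp]
    have : e.toAlgHom.toLinearMap.comp e.symm.toAlgHom.toLinearMap = LinearMap.id := by
      ext z; simp
    rw [this, LinearMap.rTensor_id, LinearMap.id_apply]
  have h0 : φ.baseChange A x = 0 := by
    have := springer_quad_nat φ e.toAlgHom x
    rw [hxy, hy] at this
    exact e.injective (by simpa using this.symm)
  rw [← hxy, h x h0, map_zero]

end Bilin

theorem springer_coeff_bilin (B₀ : LinearMap.BilinForm F V) (n : ℕ)
    (x y : (Polynomial F) ⊗[F] V) :
    ((B₀.baseChange (Polynomial F)) x y).coeff n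
      = ∑ ij ∈ Finset.HasAntidiagonal.antidiagonal n,
          B₀ (springerCoeffT F V ij.1 x) (springerCoeffT F V ij.2 y) := by
  induction x with
  | zero => simp
  | add x₁ x₂ h₁ h₂ => simp [map_add, h₁, h₂, Finset.sum_add_distrib]
  | tmul g v =>
    induction y with
    | zero => simp
    | add y₁ y₂ h₁ h₂ => simp [map_add, h₁, h₂, Finset.sum_add_distrib]
    | tmul g' v' =>
      simp only [LinearMap.BilinForm.baseChange_tmul, springerCoeffT_tmul, map_smul,
        LinearMap.smul_apply, Polynomial.coeff_smul, Polynomial.coeff_mul, smul_eq_mul,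
        Finset.mul_sum]
      refine Finset.sum_congr rfl fun ij _ => by ring

variable [Invertible (2 : F)]

theorem springer_coeff_quad (φ : QuadraticForm F V) (n : ℕ) (x : (Polynomial F) ⊗[F] V) :
    (φ.baseChange (Polynomial F) x).coeff n
      = ∑ ij ∈ Finset.HasAntidiagonal.antidiagonal n,
          (QuadraticMap.associated (R := F) φ) (springerCoeffT F V ij.1 x)
            (springerCoeffT F V ij.2 x) := by
  letI : Invertible (2 : Polynomial F) :=
    (Invertible.map (algebraMap F (Polynomial F)) 2).copy 2 (map_ofNat _ _).symm
  have h1 := QuadraticMap.associated_eq_self_apply (Polynomial F)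
    (φ.baseChange (Polynomial F)) x
  rw [← h1, QuadraticForm.associated_baseChange]
  exact springer_coeff_bilin _ n x x

theorem springer_exists_odd_monic_factor :
    ∀ (n : ℕ) (h : F[X]), h.natDegree = n → Odd h.natDegree →
      ∃ q : F[X], q.Monic ∧ Irreducible q ∧ Odd q.natDegree ∧ q ∣ h := by
  intro n
  induction n using Nat.strong_induction_on with
  | _ n IH =>
  intro h hn hodd
  have hne : ¬ IsUnit h := fun hu => by
    simp [Polynomial.natDegree_eq_zero_of_isUnit hu] at hodd
  have h0 : h ≠ 0 := fun h0 => by simp [h0] at hodd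
  obtain ⟨q₀, hqm, hqi, hqd⟩ := Polynomial.exists_monic_irreducible_factor h hne
  by_cases hq : Odd q₀.natDegree
  · exact ⟨q₀, hqm, hqi, hq, hqd⟩
  · obtain ⟨h₂, rfl⟩ := hqd
    have hq0 : q₀ ≠ 0 := hqi.ne_zero
    have h₂0 : h₂ ≠ 0 := fun h' => by simp [h'] at h0
    rw [Polynomial.natDegree_mul hq0 h₂0] at hodd
    have hodd₂ : Odd h₂.natDegree := by
      have h1 := Nat.odd_iff.mp hodd
      have h2 := Nat.even_iff.mp (Nat.not_odd_iff_even.mp hq)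
      exact Nat.odd_iff.mpr (by omega)
    have hqpos : 0 < q₀.natDegree := hqi.natDegree_pos
    obtain ⟨q, hm, hi, ho, hd⟩ := IH h₂.natDegree
      (by rw [Polynomial.natDegree_mul hq0 h₂0] at hn; omega) h₂ rfl hodd₂
    exact ⟨q, hm, hi, ho, hd.mul_left _⟩

end Springer

section SpringerCancel
variable {F V : Type*} [Field F] [AddCommGroup V] [Module F V]
variable {K E : Type*} [Field K] [Field E] [Algebra F K] [Algebra K E] [Algebra F E]
  [IsScalarTower F K E]

theorem springer_bilin_cancel (B₀ : LinearMap.BilinForm F V) (x y : E ⊗[K] (K ⊗[F] V)) :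
    ((B₀.baseChange K).baseChange E) x y
      = (B₀.baseChange E) (AlgebraTensorModule.cancelBaseChange F K E E V x)
          (AlgebraTensorModule.cancelBaseChange F K E E V y) := by
  induction x with
  | zero => simp
  | add x₁ x₂ h₁ h₂ => simp [map_add, h₁, h₂]
  | tmul e m =>
    induction y with
    | zero => simp
    | add y₁ y₂ h₁ h₂ => simp [map_add, h₁, h₂]
    | tmul e' m' =>
      induction m with
      | zero => simp
      | add m₁ m₂ h₁ h₂ => simp [tmul_add, map_add, LinearMap.add_apply, h₁, h₂]
      | tmul k v =>
        induction m' with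
        | zero => simp
        | add m₁ m₂ h₁ h₂ => simp [tmul_add, map_add, h₁, h₂]
        | tmul k' v' =>
          simp only [LinearMap.BilinForm.baseChange_tmul,
            AlgebraTensorModule.cancelBaseChange_tmul]
          rw [smul_assoc]
          congr 1
          rw [smul_mul_smul_comm, Algebra.smul_def]

theorem springer_quad_cancel [Invertible (2 : F)] [Invertible (2 : K)]
    (φ : QuadraticForm F V) (x : E ⊗[K] (K ⊗[F] V)) :
    ((φ.baseChange K).baseChange E) x
      = (φ.baseChange E) (AlgebraTensorModule.cancelBaseChange F K E E V x) := by
  letI : Invertible (2 : E) := (Invertible.map (algebraMap F E) 2).copy 2 (map_ofNat _ _).symm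
  have h1 := QuadraticMap.associated_eq_self_apply E ((φ.baseChange K).baseChange E) x
  have h2 := QuadraticMap.associated_eq_self_apply E (φ.baseChange E)
    (AlgebraTensorModule.cancelBaseChange F K E E V x)
  rw [← h1, ← h2, QuadraticForm.associated_baseChange, QuadraticForm.associated_baseChange,
    QuadraticForm.associated_baseChange]
  exact springer_bilin_cancel _ x x
end SpringerCancel
section SpringerCore
variable {F V : Type*} [Field F] [AddCommGroup V] [Module F V] [Invertible (2 : F)]
theorem springer_core (φ : QuadraticForm F V) (hani : φ.Anisotropic) :
    ∀ (n : ℕ) (p : F[X]), p.Monic → Irreducible p → Odd p.natDegree → p.natDegree ≤ n →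
      (φ.baseChange (AdjoinRoot p)).Anisotropic := by
  classical
  intro n
  induction n using Nat.strong_induction_on with
  | _ n IH =>
  intro p hmon hirr hoddp hlen v hQv
  by_contra hv0
  have hp0 : p ≠ 0 := hmon.ne_zero
  have hppos : 0 < p.natDegree := hoddp.pos
  set b := Module.Basis.ofVectorSpace F V with hbdef
  clear_value b
  set c := (b.baseChange (AdjoinRoot p)).repr v with hcdef
  have hcne : c ≠ 0 := fun h => hv0 ((b.baseChange (AdjoinRoot p)).repr.map_eq_zero_iff.mp h)
  have hvsum : v = ∑ j ∈ c.support, (c j) ⊗ₜ (b j : V) := by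
    conv_lhs => rw [← (b.baseChange (AdjoinRoot p)).linearCombination_repr v]
    rw [Finsupp.linearCombination_apply, Finsupp.sum]
    refine Finset.sum_congr rfl fun j hj => ?_
    rw [Module.Basis.baseChange_apply, smul_tmul', smul_eq_mul, mul_one]
  clear_value c
  set s := c.support with hsdef
  have hs : s.Nonempty := Finsupp.support_nonempty_iff.mpr hcne
  -- lifts of the coordinates, of degree < deg p
  set g : _ → F[X] := fun j => (AdjoinRoot.mk_surjective (c j)).choose %ₘ p with hgdef
  have hmod : ∀ x : F[X], AdjoinRoot.mk p (x %ₘ p) = AdjoinRoot.mk p x := by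
    intro x
    conv_rhs => rw [← Polynomial.modByMonic_add_div x p]
    rw [map_add, map_mul, AdjoinRoot.mk_self, zero_mul, add_zero]
  have hg : ∀ j, AdjoinRoot.mk p (g j) = c j := fun j =>
    (hmod _).trans (AdjoinRoot.mk_surjective (c j)).choose_spec
  have hgdeg : ∀ j, (g j).natDegree < p.natDegree := by
    intro j
    by_cases h0 : g j = 0
    · simpa [h0] using hppos
    · exact Polynomial.natDegree_lt_natDegree h0 (Polynomial.degree_modByMonic_lt _ hmon)
  have hgs : ∀ j ∈ s, ¬ p ∣ g j := by
    intro j hj hdvd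
    have : c j = 0 := by rw [← hg j, AdjoinRoot.mk_eq_zero.mpr hdvd]
    exact Finsupp.mem_support_iff.mp hj this
  have hgne : ∀ j ∈ s, g j ≠ 0 := fun j hj h0 => hgs j hj (h0 ▸ dvd_zero p)
  clear_value g
  -- extract gcd
  obtain ⟨g', hg', hgcd⟩ := Finset.extract_gcd g hs
  set G := s.gcd g with hGdef
  have hpG : ¬ p ∣ G := by
    obtain ⟨j₀, hj₀⟩ := hs
    exact fun hd => hgs j₀ hj₀ (hd.trans (Finset.gcd_dvd hj₀))
  have hG0 : G ≠ 0 := by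
    obtain ⟨j₀, hj₀⟩ := hs
    exact fun h0 => hgne j₀ hj₀ (Finset.gcd_eq_zero_iff.mp h0 j₀ hj₀)
  have hg'ne : ∀ j ∈ s, g' j ≠ 0 := by
    intro j hj h0
    exact hgne j hj (by rw [hg' j hj, h0, mul_zero])
  -- the two tensors
  set w' : (Polynomial F) ⊗[F] V := ∑ j ∈ s, (g' j) ⊗ₜ (b j : V) with hw'def
  clear_value w'
  set w : (Polynomial F) ⊗[F] V := ∑ j ∈ s, (g j) ⊗ₜ (b j : V) with hwdef
  clear_value w
  have hw_smul : w = G • w' := by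
    rw [hwdef, hw'def, Finset.smul_sum]
    refine Finset.sum_congr rfl fun j hj => ?_
    rw [hg' j hj, smul_tmul', smul_eq_mul]
  have hrTw : (springerMkAlg p).toLinearMap.rTensor V w = v := by
    rw [hwdef, map_sum, hvsum]
    refine Finset.sum_congr rfl fun j hj => ?_
    rw [LinearMap.rTensor_tmul, AlgHom.toLinearMap_apply, springerMkAlg_apply, hg]
  -- p divides the polynomial value
  set P : F[X] := φ.baseChange (Polynomial F) w' with hPdef
  have hpP : p ∣ P := by
    have h1 : AdjoinRoot.mk p (φ.baseChange (Polynomial F) w) = 0 := by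
      have := springer_quad_nat φ (springerMkAlg p) w
      rw [hrTw, hQv] at this
      exact this.symm
    have h2 : φ.baseChange (Polynomial F) w = G * G * P := by
      rw [hw_smul, QuadraticMap.map_smul, smul_eq_mul, hPdef]
    rw [h2] at h1
    have h3 : p ∣ G * G * P := AdjoinRoot.mk_eq_zero.mp h1
    have hprime : Prime p := hirr.prime
    rcases hprime.dvd_mul.mp h3 with h4 | h4
    · rcases hprime.dvd_mul.mp h4 with h5 | h5 <;> exact absurd h5 hpG
    · exact h4
  -- degree analysis
  set d := s.sup fun j => (g' j).natDegree with hddef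
  have hg'lt : ∀ j ∈ s, (g' j).natDegree < p.natDegree := by
    intro j hj
    have hdvd : g' j ∣ g j := Dvd.intro_left G (hg' j hj).symm
    exact lt_of_le_of_lt (Polynomial.natDegree_le_of_dvd hdvd (hgne j hj)) (hgdeg j)
  have hdlt : d < p.natDegree := by
    rw [hddef]
    exact (Finset.sup_lt_iff (by simpa using hppos)).mpr hg'lt
  have hcT : ∀ i, springerCoeffT F V i w' = ∑ j ∈ s, (g' j).coeff i • (b j : V) := by
    intro i
    rw [hw'def, map_sum]
    exact Finset.sum_congr rfl fun j hj => springerCoeffT_tmul i _ _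
  have hcT0 : ∀ i, d < i → springerCoeffT F V i w' = 0 := by
    intro i hi
    rw [hcT]
    refine Finset.sum_eq_zero fun j hj => ?_
    have hle : (g' j).natDegree ≤ d := hddef ▸ Finset.le_sup (f := fun j => (g' j).natDegree) hj
    rw [Polynomial.coeff_eq_zero_of_natDegree_lt (lt_of_le_of_lt hle hi), zero_smul]
  obtain ⟨j₁, hj₁s, hj₁⟩ := Finset.exists_mem_eq_sup s hs fun j => (g' j).natDegree
  have hlead : (g' j₁).coeff d ≠ 0 := by
    rw [hddef, hj₁]
    exact Polynomial.leadingCoeff_ne_zero.mpr (hg'ne j₁ hj₁s)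
  set wl := springerCoeffT F V d w' with hwldef
  have hwl0 : wl ≠ 0 := by
    intro h0
    rw [hwldef, hcT] at h0
    have hli := linearIndependent_iff'.mp b.linearIndependent s (fun j => (g' j).coeff d) h0
    exact hlead (hli j₁ hj₁s)
  have hφwl : φ wl ≠ 0 := fun h => hwl0 (hani wl h)
  have hPtop : P.coeff (2 * d) = φ wl := by
    rw [hPdef, springer_coeff_quad]
    rw [Finset.sum_eq_single_of_mem (d, d) (Finset.HasAntidiagonal.mem_antidiagonal.mpr (two_mul d).symm)]
    · exact QuadraticMap.associated_eq_self_apply F φ wl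
    · intro ij hij hne
      have hij' := Finset.HasAntidiagonal.mem_antidiagonal.mp hij
      have : d < ij.1 ∨ d < ij.2 := by
        by_contra hcon
        push_neg at hcon
        exact hne (Prod.ext (by omega) (by omega))
      rcases this with h | h
      · rw [hcT0 _ h, map_zero, LinearMap.zero_apply]
      · rw [hcT0 _ h, map_zero]
  have hPhigh : ∀ m, 2 * d < m → P.coeff m = 0 := by
    intro m hm
    rw [hPdef, springer_coeff_quad]
    refine Finset.sum_eq_zero fun ij hij => ?_
    have hij' := Finset.HasAntidiagonal.mem_antidiagonal.mp hij
    have : d < ij.1 ∨ d < ij.2 := by omega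
    rcases this with h | h
    · rw [hcT0 _ h, map_zero, LinearMap.zero_apply]
    · rw [hcT0 _ h, map_zero]
  have hP0 : P ≠ 0 := fun h => hφwl (by rw [← hPtop, h, Polynomial.coeff_zero])
  have hPdeg : P.natDegree = 2 * d :=
    le_antisymm (Polynomial.natDegree_le_iff_coeff_eq_zero.mpr hPhigh)
      (Polynomial.le_natDegree_of_ne_zero (hPtop ▸ hφwl))
  obtain ⟨h, hh⟩ := hpP
  have hh0 : h ≠ 0 := fun h0 => hP0 (by rw [hh, h0, mul_zero])
  have hdeg_sum : p.natDegree + h.natDegree = 2 * d := by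
    rw [← Polynomial.natDegree_mul hp0 hh0, ← hh, hPdeg]
  have hodd_h : Odd h.natDegree := by
    have h1 := Nat.odd_iff.mp hoddp
    exact Nat.odd_iff.mpr (by omega)
  have hh_lt : h.natDegree < p.natDegree := by omega
  obtain ⟨q, hqm, hqi, hqo, hqd⟩ := springer_exists_odd_monic_factor h.natDegree h rfl hodd_h
  have hqP : q ∣ P := hqd.trans (Dvd.intro_left p hh.symm)
  have hqdeg : q.natDegree < n :=
    lt_of_le_of_lt (Polynomial.natDegree_le_of_dvd hqd hh0) (lt_of_lt_of_le hh_lt hlen)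
  have hq_ani := IH q.natDegree hqdeg q hqm hqi hqo le_rfl
  -- build the contradiction vector
  set v' := (springerMkAlg q).toLinearMap.rTensor V w' with hv'def
  have hv'Q : φ.baseChange (AdjoinRoot q) v' = 0 := by
    rw [hv'def, springer_quad_nat, springerMkAlg_apply, ← hPdef,
      AdjoinRoot.mk_eq_zero.mpr hqP]
  have hv'0 : v' = 0 := hq_ani v' hv'Q
  have hexp : v' = ∑ j ∈ s, (AdjoinRoot.mk q (g' j)) ⊗ₜ (b j : V) := by
    rw [hv'def, hw'def, map_sum]
    refine Finset.sum_congr rfl fun j hj => ?_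
    rw [LinearMap.rTensor_tmul, AlgHom.toLinearMap_apply, springerMkAlg_apply]
  have hall : ∀ j ∈ s, q ∣ g' j := by
    intro j hj
    rw [← AdjoinRoot.mk_eq_zero (f := q)]
    have hrep : (b.baseChange (AdjoinRoot q)).repr v' j = AdjoinRoot.mk q (g' j) := by
      rw [hexp, map_sum]
      rw [Finsupp.finset_sum_apply]
      rw [Finset.sum_eq_single_of_mem j hj]
      · rw [Module.Basis.baseChange_repr_tmul, Module.Basis.repr_self, Finsupp.single_apply, if_pos rfl,
          one_smul]
      · intro i hi hne
        rw [Module.Basis.baseChange_repr_tmul, Module.Basis.repr_self, Finsupp.single_apply, if_neg hne,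
          zero_smul]
    rw [← hrep, hv'0, map_zero, Finsupp.coe_zero, Pi.zero_apply]
  have hq1 : q ∣ 1 := hgcd ▸ Finset.dvd_gcd hall
  exact hqi.not_isUnit (isUnit_of_dvd_one hq1)
end SpringerCore

set_option synthInstance.maxHeartbeats 1000000 in
set_option maxHeartbeats 2000000 in
theorem springer_main :
    ∀ (n : ℕ) (F : Type) (_ : Field F) (_ : Invertible (2 : F)) (E : Type) (_ : Field E)
      (_ : Algebra F E) (_ : FiniteDimensional F E), Odd (Module.finrank F E) →
      Module.finrank F E ≤ n →
      ∀ (V : Type) (_ : AddCommGroup V) (_ : Module F V) (φ : QuadraticForm F V),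
        φ.Anisotropic → (φ.baseChange E).Anisotropic := by
  intro n
  induction n using Nat.strong_induction_on with
  | _ n IH =>
  intro F _ _ E _ _ _ hodd hlen V _ _ φ hani
  by_cases hsurj : Function.Surjective (algebraMap F E)
  · -- trivial extension
    intro v hQ
    have hsurj' : Function.Surjective ((Algebra.ofId F E).toLinearMap) := by
      intro y; obtain ⟨x, hx⟩ := hsurj y; exact ⟨x, hx⟩
    obtain ⟨x, rfl⟩ := LinearMap.rTensor_surjective V hsurj' v
    have hnat := springer_quad_nat φ (Algebra.ofId F E) x
    rw [hQ] at hnat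
    have hx0 : φ.baseChange F x = 0 :=
      (algebraMap F E).injective (by simpa [Algebra.ofId_apply] using hnat.symm)
    have hxrep : x = (1 : F) ⊗ₜ (TensorProduct.lid F V x) := by
      conv_lhs => rw [← (TensorProduct.lid F V).symm_apply_apply x]
      exact TensorProduct.lid_symm_apply _
    rw [hxrep] at hx0
    rw [QuadraticForm.baseChange_tmul] at hx0
    have : φ (TensorProduct.lid F V x) = 0 := by simpa using hx0
    have h0 := hani _ this
    rw [hxrep, h0, tmul_zero, map_zero]
  · -- pick a proper simple subextension
    have hex : ∃ y : E, ¬ ∃ x : F, algebraMap F E x = y := by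
      by_contra hc
      push_neg at hc
      exact hsurj fun y => hc y
    obtain ⟨α, hα⟩ := hex
    have hint : IsIntegral F α := IsIntegral.of_finite F α
    have hpm : (minpoly F α).Monic := minpoly.monic hint
    have hpi : Irreducible (minpoly F α) := minpoly.irreducible hint
    set K := IntermediateField.adjoin F {α} with hKdef
    have hfinK : Module.finrank F K = (minpoly F α).natDegree :=
      IntermediateField.adjoin.finrank hint
    have hmul : Module.finrank F K * Module.finrank K E = Module.finrank F E :=
      Module.finrank_mul_finrank F K E
    have hoddK : Odd (Module.finrank F K) := (Nat.odd_mul.mp (hmul ▸ hodd)).1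
    have hoddKE : Odd (Module.finrank K E) := (Nat.odd_mul.mp (hmul ▸ hodd)).2
    have hK1 : Module.finrank F K ≠ 1 := by
      intro h1
      have hbot : K = ⊥ := IntermediateField.finrank_eq_one_iff.mp h1
      have hmem : α ∈ K := IntermediateField.mem_adjoin_simple_self F α
      rw [hbot, IntermediateField.mem_bot] at hmem
      obtain ⟨x, hx⟩ := hmem
      exact hα ⟨x, hx⟩
    have h1 := springer_core φ hani (minpoly F α).natDegree (minpoly F α) hpm hpi
      (hfinK ▸ hoddK) le_rfl
    have hKan : (φ.baseChange K).Anisotropic :=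
      springer_anisotropic_congr φ (IntermediateField.adjoinRootEquivAdjoin F hint) h1
    letI : Invertible (2 : K) := (Invertible.map (algebraMap F K) 2).copy 2 (map_ofNat _ _).symm
    have hlt : Module.finrank K E < n := by
      have hp1 : 0 < Module.finrank K E := Module.finrank_pos
      have hk1 : 0 < Module.finrank F K := Module.finrank_pos
      have h2k : 2 ≤ Module.finrank F K := by omega
      have : 1 * Module.finrank K E < Module.finrank F K * Module.finrank K E :=
        Nat.mul_lt_mul_of_lt_of_le (by omega) le_rfl hp1
      rw [one_mul, hmul] at this
      omega
    have h2 := IH (Module.finrank K E) hlt K inferInstance inferInstance E inferInstance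
      inferInstance inferInstance hoddKE le_rfl (K ⊗[F] V) inferInstance inferInstance
      (φ.baseChange K) hKan
    intro v hQ
    set x := (AlgebraTensorModule.cancelBaseChange F K E E V).symm v with hxdef
    have hcx : AlgebraTensorModule.cancelBaseChange F K E E V x = v :=
      (AlgebraTensorModule.cancelBaseChange F K E E V).apply_symm_apply v
    have h3 : ((φ.baseChange K).baseChange E) x = 0 := by
      rw [springer_quad_cancel, hcx, hQ]
    have h4 := h2 x h3
    rw [← hcx, h4, map_zero]

/-- (Springer.) An anisotropic quadratic form over `F` (char `≠ 2`) remains anisotropic over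
every finite field extension of odd degree. -/
theorem springer_odd_degree {F : Type} [Field F] [Invertible (2 : F)] {E : Type} [Field E]
    [Algebra F E] [FiniteDimensional F E] (hodd : Odd (Module.finrank F E))
    {V : Type} [AddCommGroup V] [Module F V] (φ : QuadraticForm F V) (hani : φ.Anisotropic) :
    (φ.baseChange E).Anisotropic :=
  springer_main (Module.finrank F E) F inferInstance inferInstance E inferInstance inferInstance
    inferInstance hodd le_rfl V inferInstance inferInstance φ hani
end

section
/- For every n ≥ 1 and every i ∈ {1, ..., n+1}, there exists a field F of characteristic ≠ 2 and an anisotropic quadratic form φ over F with [φ] ∈ I(F)^n and dim(φ) = 2^{n+1} - 2^i. Such a form is given over a rational function field by ⟨⟨u_1,...,u_{i-1}⟩⟩ ⊗ (⟨⟨v_1,...,v_{n+1-i}⟩⟩' ⊥ -⟨⟨w_1,...,w_{n+1-i}⟩⟩') in the variables u, v, w. -/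
open TensorProduct

/-! ### Auxiliary: descent for polynomials -/

open Polynomial in
lemma poly_step {K : Type*} [Field K] {ι κ : Type*} [Fintype ι] [Fintype κ]
    (w : ι → K) (w' : κ → K)
    (h0 : ∀ x : ι → K, ∑ j, w j * x j ^ 2 = 0 → x = 0)
    (h1 : ∀ x : κ → K, ∑ j, w' j * x j ^ 2 = 0 → x = 0) :
    ∀ (N : ℕ) (p : ι → K[X]) (q : κ → K[X]),
      (∀ j, (p j).natDegree ≤ N) → (∀ j, (q j).natDegree ≤ N) →
      (∑ j, C (w j) * p j ^ 2) + X * (∑ j, C (w' j) * q j ^ 2) = 0 →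
      p = 0 ∧ q = 0 := by
  have key : ∀ (p : ι → K[X]) (q : κ → K[X]),
      (∑ j, C (w j) * p j ^ 2) + X * (∑ j, C (w' j) * q j ^ 2) = 0 →
      ∃ (h : ι → K[X]) (k : κ → K[X]), (∀ j, p j = X * h j) ∧ (∀ j, q j = X * k j) ∧
        (∑ j, C (w j) * h j ^ 2) + X * (∑ j, C (w' j) * k j ^ 2) = 0 := by
    intro p q heq
    have hp0 : ∀ j, (p j).eval 0 = 0 := by
      have := congrArg (Polynomial.eval 0) heq
      simp only [eval_add, eval_mul, eval_X, eval_pow, eval_C, eval_finset_sum, eval_zero,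
        zero_mul, add_zero] at this
      have := h0 (fun j => (p j).eval 0) this
      intro j; exact congrFun this j
    have hdvd : ∀ j, X ∣ p j := fun j => X_dvd_iff.2 (by
      rw [coeff_zero_eq_eval_zero]; exact hp0 j)
    choose h hh using hdvd
    have e1 : ∑ j, C (w j) * (X * h j) ^ 2 = X ^ 2 * ∑ j, C (w j) * h j ^ 2 := by
      rw [Finset.mul_sum]; exact Finset.sum_congr rfl fun j _ => by ring
    have heq2 : X * ((X * ∑ j, C (w j) * h j ^ 2) + (∑ j, C (w' j) * q j ^ 2)) = 0 := by
      have : X * ((X * ∑ j, C (w j) * h j ^ 2) + (∑ j, C (w' j) * q j ^ 2))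
          = X ^ 2 * (∑ j, C (w j) * h j ^ 2) + X * (∑ j, C (w' j) * q j ^ 2) := by ring
      rw [this, ← e1, ← heq]
      exact congrArg₂ (· + ·) (Finset.sum_congr rfl fun j _ => by rw [hh j]) rfl
    have heq3 : (X * ∑ j, C (w j) * h j ^ 2) + (∑ j, C (w' j) * q j ^ 2) = 0 :=
      (mul_eq_zero.1 heq2).resolve_left X_ne_zero
    have hq0 : ∀ j, (q j).eval 0 = 0 := by
      have := congrArg (Polynomial.eval 0) heq3
      simp only [eval_add, eval_mul, eval_X, eval_pow, eval_C, eval_finset_sum, eval_zero,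
        zero_mul, zero_add] at this
      have := h1 (fun j => (q j).eval 0) this
      intro j; exact congrFun this j
    have hdvd' : ∀ j, X ∣ q j := fun j => X_dvd_iff.2 (by
      rw [coeff_zero_eq_eval_zero]; exact hq0 j)
    choose k hk using hdvd'
    refine ⟨h, k, hh, hk, ?_⟩
    have e2 : ∑ j, C (w' j) * (X * k j) ^ 2 = X ^ 2 * ∑ j, C (w' j) * k j ^ 2 := by
      rw [Finset.mul_sum]; exact Finset.sum_congr rfl fun j _ => by ring
    have heq4 : X * ((∑ j, C (w j) * h j ^ 2) + X * (∑ j, C (w' j) * k j ^ 2)) = 0 := by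
      have : X * ((∑ j, C (w j) * h j ^ 2) + X * (∑ j, C (w' j) * k j ^ 2))
          = X * (∑ j, C (w j) * h j ^ 2) + X ^ 2 * (∑ j, C (w' j) * k j ^ 2) := by ring
      rw [this, ← e2, ← heq3]
      exact congrArg₂ (· + ·) rfl (Finset.sum_congr rfl fun j _ => by rw [hk j])
    exact (mul_eq_zero.1 heq4).resolve_left X_ne_zero
  intro N
  induction N with
  | zero =>
    intro p q hp hq heq
    obtain ⟨h, k, hh, hk, _⟩ := key p q heq
    constructor
    · funext j
      have : (p j).natDegree ≤ 0 := hp j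
      have e := eq_C_of_natDegree_le_zero this
      have : (p j).coeff 0 = 0 := by
        rw [hh j]; simp
      rw [e, this]; simp
    · funext j
      have : (q j).natDegree ≤ 0 := hq j
      have e := eq_C_of_natDegree_le_zero this
      have : (q j).coeff 0 = 0 := by
        rw [hk j]; simp
      rw [e, this]; simp
  | succ N ih =>
    intro p q hp hq heq
    obtain ⟨h, k, hh, hk, heq'⟩ := key p q heq
    have hhd : ∀ j, (h j).natDegree ≤ N := by
      intro j
      by_cases hz : h j = 0
      · simp [hz]
      · have := hp j
        rw [hh j, natDegree_mul X_ne_zero hz, natDegree_X] at this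
        omega
    have hkd : ∀ j, (k j).natDegree ≤ N := by
      intro j
      by_cases hz : k j = 0
      · simp [hz]
      · have := hq j
        rw [hk j, natDegree_mul X_ne_zero hz, natDegree_X] at this
        omega
    obtain ⟨hh0, hk0⟩ := ih h k hhd hkd heq'
    constructor
    · funext j; rw [hh j, congrFun hh0 j]; simp
    · funext j; rw [hk j, congrFun hk0 j]; simp

/-! ### The tower of rational function fields -/

noncomputable def KtP : ℕ → (K : Type) × Field K
  | 0 => ⟨ℚ, inferInstance⟩
  | (N+1) => letI := (KtP N).2; ⟨RatFunc (KtP N).1, inferInstance⟩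

abbrev Kt (N : ℕ) : Type := (KtP N).1
noncomputable instance KtField (N : ℕ) : Field (Kt N) := (KtP N).2

/-- monomial with squarefree support `S` (only indices `< N` count). -/
noncomputable def KtMono : (N : ℕ) → Finset ℕ → Kt N
  | 0, _ => 1
  | (N+1), S => algebraMap (Kt N) (RatFunc (Kt N)) (KtMono N (S.erase N)) *
      (if N ∈ S then (RatFunc.X : RatFunc (Kt N)) else 1)

lemma KtMono_ne_zero : ∀ (N : ℕ) (S : Finset ℕ), KtMono N S ≠ 0
  | 0, _ => one_ne_zero
  | (N+1), S => by
    rw [KtMono]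
    apply mul_ne_zero (M₀ := RatFunc (Kt N))
    · exact fun h => KtMono_ne_zero N _ ((_root_.map_eq_zero _).1 h)
    · split
      · exact RatFunc.X_ne_zero
      · exact one_ne_zero

lemma Kt_two_ne_zero : ∀ N, (2 : Kt N) ≠ 0
  | 0 => by show (2:ℚ) ≠ 0; norm_num
  | (N+1) => by
    have h : (2 : RatFunc (Kt N)) = algebraMap (Kt N) (RatFunc (Kt N)) 2 := by
      rw [map_ofNat]
    show (2 : RatFunc (Kt N)) ≠ 0
    rw [h]
    exact fun hc => Kt_two_ne_zero N ((_root_.map_eq_zero _).1 hc)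

lemma KtMono_empty : ∀ N, KtMono N ∅ = 1
  | 0 => rfl
  | (N+1) => by
    rw [KtMono]
    simp [KtMono_empty N]
    rfl

lemma KtMono_single_of_ne {N m : ℕ} (hmN : m ≠ N) :
    KtMono (N+1) {m} = algebraMap (Kt N) (RatFunc (Kt N)) (KtMono N {m}) := by
  rw [KtMono, Finset.erase_eq_of_notMem (by simp [Ne.symm hmN]),
    if_neg (by simp [Ne.symm hmN]), mul_one]

lemma KtMono_prod (N : ℕ) (S : Finset ℕ) :
    KtMono N S = ∏ m ∈ S, KtMono N {m} := by
  induction N generalizing S with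
  | zero => simp [KtMono]
  | succ N ih =>
    by_cases hN : N ∈ S
    · rw [KtMono, if_pos hN, ih, map_prod, ← Finset.prod_erase_mul _ _ hN]
      congr 1
      · exact Finset.prod_congr rfl fun m hm =>
          (KtMono_single_of_ne (Finset.ne_of_mem_erase hm)).symm
      · rw [KtMono]
        simp [KtMono_empty N]
    · rw [KtMono, if_neg hN, mul_one, Finset.erase_eq_of_notMem hN, ih, map_prod]
      exact Finset.prod_congr rfl fun m hm =>
        (KtMono_single_of_ne (by rintro rfl; exact hN hm)).symm

/-! ### Anisotropy of monomial diagonal forms over the tower -/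

theorem Kt_aniso : ∀ (N : ℕ) (ι : Type) [Fintype ι] (s : ι → Finset ℕ),
    (∀ j, s j ⊆ Finset.range N) → Function.Injective s →
    ∀ (ε : ι → ℚ), (∀ j, ε j ≠ 0) →
    ∀ x : ι → Kt N, ∑ j, ((ε j : Kt N) * KtMono N (s j)) * x j ^ 2 = 0 → x = 0 := by
  intro N
  induction N with
  | zero =>
    intro ι _ s hs hinj ε hε x heq
    funext j
    haveI : Subsingleton ι := ⟨fun a b => hinj
      ((Finset.subset_empty.1 (by simpa using hs a)).trans
        (Finset.subset_empty.1 (by simpa using hs b)).symm)⟩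
    haveI := uniqueOfSubsingleton j
    rw [Fintype.sum_unique] at heq
    have h1 : KtMono 0 (s default) = 1 := rfl
    rw [h1, mul_one] at heq
    have : ((ε default : Kt 0) : ℚ) ≠ 0 := by
      show (Rat.cast (ε default) : ℚ) ≠ 0
      rw [Rat.cast_id]; exact hε default
    have hx : x default = 0 := by
      rcases mul_eq_zero.1 heq with h | h
      · exact absurd h this
      · exact pow_eq_zero_iff (by norm_num) |>.1 h
    calc x j = x default := by congr 1; exact Subsingleton.elim _ _
    _ = 0 := hx
  | succ N ih =>
    intro ι _ s hinjb hinj ε hε x heq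
    classical
    let algP := algebraMap (Polynomial (Kt N)) (RatFunc (Kt N))
    let algK := algebraMap (Kt N) (RatFunc (Kt N))
    let y : ι → RatFunc (Kt N) := x
    have heqR : ∑ j, (((ε j : ℚ) : RatFunc (Kt N)) *
        (algK (KtMono N ((s j).erase N)) * (if N ∈ s j then RatFunc.X else 1))) * y j ^ 2
        = 0 := heq
    obtain ⟨b, hb⟩ := IsLocalization.exist_integer_multiples_of_finite
      (nonZeroDivisors (Polynomial (Kt N))) y
    choose p hp using hb
    have hbne : algP (b : Polynomial (Kt N)) ≠ 0 := by
      intro hc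
      apply nonZeroDivisors.ne_zero b.2
      apply RatFunc.algebraMap_injective (Kt N)
      rw [map_zero]
      exact hc
    set w : ι → Kt N := fun j => (ε j : Kt N) * KtMono N ((s j).erase N) with hw
    have heq2 : ∑ j, algP ((Polynomial.C (w j)) * (if N ∈ s j then Polynomial.X else 1) * p j ^ 2)
        = 0 := by
      have e1 : ∀ j, algP ((Polynomial.C (w j)) * (if N ∈ s j then Polynomial.X else 1) * p j ^ 2)
          = (algP (b : Polynomial (Kt N)))^2 * ((((ε j : ℚ) : RatFunc (Kt N)) *
            (algK (KtMono N ((s j).erase N)) * (if N ∈ s j then RatFunc.X else 1))) * y j ^ 2) := by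
        intro j
        have hpx : algP (p j) = algP (b : Polynomial (Kt N)) * y j := by
          rw [hp j, Algebra.smul_def]
        have hcast : (((ε j : ℚ)) : RatFunc (Kt N)) = algK ((ε j : Kt N)) := by
          rw [map_ratCast]
        have hite : algP (if N ∈ s j then Polynomial.X else 1)
            = (if N ∈ s j then RatFunc.X else 1) := by
          split <;> simp [algP, RatFunc.algebraMap_X]
        rw [map_mul, map_mul, map_pow, hpx, mul_pow, hite, hcast, hw]
        have hC : algP (Polynomial.C ((ε j : Kt N) * KtMono N ((s j).erase N)))
            = algK (ε j : Kt N) * algK (KtMono N ((s j).erase N)) := by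
          simp only [map_mul, RatFunc.algebraMap_C, RatFunc.algebraMap_eq_C, algP, algK]
        rw [hC]
        ring
      rw [Finset.sum_congr rfl (fun j _ => e1 j), ← Finset.mul_sum, heqR, mul_zero]
    rw [← map_sum] at heq2
    have heq3 : ∑ j, (Polynomial.C (w j)) * (if N ∈ s j then Polynomial.X else 1) * p j ^ 2
        = 0 := RatFunc.algebraMap_injective _ (by simpa using heq2)
    rw [← Fintype.sum_subtype_add_sum_subtype (fun j => N ∈ s j)
      (fun j => (Polynomial.C (w j)) * (if N ∈ s j then Polynomial.X else 1) * p j ^ 2)] at heq3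
    have e2 : ∑ j : {j // N ∈ s j}, (Polynomial.C (w j.1)) * (if N ∈ s j.1 then Polynomial.X else 1) * p j.1 ^ 2
        = Polynomial.X * ∑ j : {j // N ∈ s j}, (Polynomial.C (w j.1)) * p j.1 ^ 2 := by
      rw [Finset.mul_sum]
      exact Finset.sum_congr rfl fun j _ => by rw [if_pos j.2]; ring
    have e3 : ∑ j : {j // ¬ N ∈ s j}, (Polynomial.C (w j.1)) * (if N ∈ s j.1 then Polynomial.X else 1) * p j.1 ^ 2
        = ∑ j : {j // ¬ N ∈ s j}, (Polynomial.C (w j.1)) * p j.1 ^ 2 := by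
      exact Finset.sum_congr rfl fun j _ => by rw [if_neg j.2, mul_one]
    rw [e2, e3, add_comm] at heq3
    have h0 : ∀ z : {j // ¬ N ∈ s j} → Kt N, ∑ j, w j.1 * z j ^ 2 = 0 → z = 0 := by
      intro z hz
      refine ih {j // ¬ N ∈ s j} (fun j => (s j.1).erase N) ?_ ?_ (fun j => ε j.1)
        (fun j => hε j.1) z hz
      · intro j m hm
        have h1 := hinjb j.1 (Finset.mem_of_mem_erase hm)
        have hne := Finset.ne_of_mem_erase hm
        simp only [Finset.mem_range] at h1 ⊢
        omega
      · intro a b hab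
        have hab' : (s a.1).erase N = (s b.1).erase N := hab
        rw [Finset.erase_eq_of_notMem a.2, Finset.erase_eq_of_notMem b.2] at hab'
        exact Subtype.ext (hinj hab')
    have h1 : ∀ z : {j // N ∈ s j} → Kt N, ∑ j, w j.1 * z j ^ 2 = 0 → z = 0 := by
      intro z hz
      refine ih {j // N ∈ s j} (fun j => (s j.1).erase N) ?_ ?_ (fun j => ε j.1)
        (fun j => hε j.1) z hz
      · intro j m hm
        have h1 := hinjb j.1 (Finset.mem_of_mem_erase hm)
        have hne := Finset.ne_of_mem_erase hm
        simp only [Finset.mem_range] at h1 ⊢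
        omega
      · intro a b hab
        have hab' : (s a.1).erase N = (s b.1).erase N := hab
        have : s a.1 = s b.1 := by
          rw [← Finset.insert_erase a.2, hab', Finset.insert_erase b.2]
        exact Subtype.ext (hinj this)
    set B := Finset.univ.sup (fun j : ι => (p j).natDegree) with hB
    obtain ⟨hp0, hq0⟩ := poly_step (fun j : {j // ¬ N ∈ s j} => w j.1)
      (fun j : {j // N ∈ s j} => w j.1) h0 h1 B
      (fun j => p j.1) (fun j => p j.1)
      (fun j => Finset.le_sup (f := fun j : ι => (p j).natDegree) (Finset.mem_univ j.1))
      (fun j => Finset.le_sup (f := fun j : ι => (p j).natDegree) (Finset.mem_univ j.1)) heq3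
    funext j
    have hpj : p j = 0 := by
      by_cases hN : N ∈ s j
      · exact congrFun hq0 ⟨j, hN⟩
      · exact congrFun hp0 ⟨j, hN⟩
    have hy := hp j
    rw [hpj, map_zero, Algebra.smul_def] at hy
    have : y j = 0 := (mul_eq_zero.1 hy.symm).resolve_left hbne
    exact this

/-! ### Equivalences of diagonal quadratic forms -/

open QuadraticMap in
lemma wss_reindex {F : Type*} [Field F] {ι κ : Type*} [Fintype ι] [Fintype κ]
    (e : ι ≃ κ) (w : κ → F) :
    (weightedSumSquares F (w ∘ e)).Equivalent (weightedSumSquares F w) := by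
  refine ⟨{ toLinearEquiv := LinearEquiv.funCongrLeft F F e.symm, map_app' := fun x => ?_ }⟩
  simp only [weightedSumSquares_apply, smul_eq_mul]
  refine (Fintype.sum_equiv e _ _ (fun i => ?_)).symm
  simp [LinearEquiv.funCongrLeft, LinearEquiv.ofLinear, LinearMap.funLeft]

open QuadraticMap in
lemma wss_prod_sum {F : Type*} [Field F] {ι κ : Type*} [Fintype ι] [Fintype κ]
    (w₁ : ι → F) (w₂ : κ → F) :
    (weightedSumSquares F (Sum.elim w₁ w₂)).Equivalent
      ((weightedSumSquares F w₁).prod (weightedSumSquares F w₂)) := by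
  refine ⟨{ toLinearEquiv := LinearEquiv.sumArrowLequivProdArrow ι κ F F,
            map_app' := fun x => ?_ }⟩
  simp only [QuadraticMap.prod_apply, weightedSumSquares_apply, smul_eq_mul]
  rw [Fintype.sum_sum_type]
  rfl

open QuadraticMap in
lemma wss_curry {F : Type*} [Field F] {ι κ : Type*} [Fintype ι] [Fintype κ] (w : ι × κ → F) :
    (weightedSumSquares F w).Equivalent
      (QuadraticMap.pi (fun i : ι => weightedSumSquares F (fun j => w (i, j)))) := by
  refine ⟨{ toLinearEquiv := LinearEquiv.curry F F ι κ, map_app' := fun x => ?_ }⟩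
  simp only [QuadraticMap.pi_apply, weightedSumSquares_apply, smul_eq_mul]
  rw [Fintype.sum_prod_type]
  rfl

open QuadraticMap in
lemma wss_binary {F : Type*} [Field F] (h2 : (2 : F) ≠ 0) (c : F) (hc : c ≠ 0) :
    (weightedSumSquares F (fun j : Fin 2 => (-1 : F) ^ (j : ℕ))).Equivalent
      (weightedSumSquares F (fun j : Fin 2 => c * (-1 : F) ^ (j : ℕ))) := by
  classical
  obtain ⟨h, hh⟩ : ∃ h : F, 2 * h = 1 := ⟨2⁻¹, mul_inv_cancel₀ h2⟩
  obtain ⟨ci, hci⟩ : ∃ ci : F, c * ci = 1 := ⟨c⁻¹, mul_inv_cancel₀ hc⟩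
  set M : Matrix (Fin 2) (Fin 2) F :=
    !![(c+1)*h, (c-1)*h; (c-1)*h, (c+1)*h] with hM
  set M' : Matrix (Fin 2) (Fin 2) F :=
    !![(c+1)*h*ci, -((c-1)*h*ci); -((c-1)*h*ci), (c+1)*h*ci] with hM'
  have hMM' : M * M' = 1 := by
    ext i j
    fin_cases i <;> fin_cases j <;>
      simp [hM, hM', Matrix.mul_apply, Fin.sum_univ_two] <;>
      first | ring1 | linear_combination (c*ci*(2*h+1))*hh + hci
  have hM'M : M' * M = 1 := by
    ext i j
    fin_cases i <;> fin_cases j <;>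
      simp [hM, hM', Matrix.mul_apply, Fin.sum_univ_two] <;>
      first | ring1 | linear_combination (c*ci*(2*h+1))*hh + hci
  refine ⟨{ toLinearEquiv := Matrix.toLin'OfInv hMM' hM'M, map_app' := fun x => ?_ }⟩
  simp only [weightedSumSquares_apply, smul_eq_mul, Matrix.toLin'OfInv, Fin.sum_univ_two]
  simp [Matrix.toLin'_apply, Matrix.mulVec, dotProduct, hM', Fin.sum_univ_two]
  linear_combination ((x 0^2 - x 1^2)*c^2*ci^2*(2*h+1))*hh + ((x 0^2 - x 1^2)*(c*ci+1))*hci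

open QuadraticMap in
lemma wss_bin_family {F : Type*} [Field F] {τ : Type*} [Fintype τ] (h2 : (2 : F) ≠ 0)
    (m : τ → F) (hm : ∀ t, m t ≠ 0) :
    (weightedSumSquares F (fun q : τ × Fin 2 => (-1 : F) ^ (q.2 : ℕ))).Equivalent
      (weightedSumSquares F (fun q : τ × Fin 2 => m q.1 * (-1 : F) ^ (q.2 : ℕ))) := by
  refine (wss_curry _).trans (QuadraticMap.Equivalent.trans ?_ (wss_curry _).symm)
  exact QuadraticMap.Equivalent.pi (fun t => wss_binary h2 (m t) (hm t))

lemma prod_hyp_zero {F : Type*} [Field F] {V : Type*} [AddCommGroup V] [Module F V]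
    (Q : QuadraticForm F V) (Q' : QuadraticForm F (Fin 0 → F)) :
    Q.Equivalent (Q.prod Q') := by
  refine ⟨{ toFun := fun v => (v, 0),
            map_add' := fun a b => Prod.ext rfl (Subsingleton.elim _ _),
            map_smul' := fun r a => Prod.ext rfl (Subsingleton.elim _ _),
            invFun := Prod.fst, left_inv := fun v => rfl,
            right_inv := fun p => Prod.ext rfl (Subsingleton.elim _ _),
            map_app' := fun v => ?_ }⟩
  simp only [QuadraticMap.prod_apply]
  rw [QuadraticMap.map_zero, add_zero]

lemma neg_one_pow_mod_two {F : Type*} [Monoid F] [HasDistribNeg F] (k : ℕ) :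
    (-1 : F) ^ (k % 2) = (-1 : F) ^ k := by
  conv_rhs => rw [← Nat.mod_add_div k 2]
  rw [pow_add, pow_mul, neg_one_sq, one_pow, mul_one]

/-! ### Main theorem -/

open QuadraticMap

/-- For every `n ≥ 1` and every `i ∈ {1, …, n+1}` there is a field `F` of characteristic `≠ 2`
and an anisotropic quadratic form `φ` over `F` with `[φ] ∈ I(F)^n` and
`dim φ = 2^(n+1) - 2^i` (for instance `⟪⟪u⟫⟫ ⊗ (⟪⟪v⟫⟫' ⊥ -⟪⟪w⟫⟫')` over a rational
function field). -/
theorem exists_small_dim (n i : ℕ) (hn : 1 ≤ n) (hi1 : 1 ≤ i) (hi2 : i ≤ n + 1) :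
    ∃ (F : Type) (_ : Field F), (2 : F) ≠ 0 ∧
      ∃ φ : QuadraticForm F (Fin (2 ^ (n + 1) - 2 ^ i) → F),
        φ.Anisotropic ∧ MemPowFundIdeal n φ := by
  classical
  obtain ⟨r, hri⟩ : ∃ r, r + 1 = i := ⟨i - 1, by omega⟩
  obtain ⟨n', hrn⟩ : ∃ n', r + n' = n := ⟨n - r, by omega⟩
  set N := n + n' with hN
  refine ⟨Kt N, inferInstance, Kt_two_ne_zero N, ?_⟩
  set idx : Fin 2 → Fin n → ℕ :=
    fun j x => if (x : ℕ) < r then (x : ℕ) else (x : ℕ) + (if j = (0 : Fin 2) then 0 else n')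
    with hidx
  have idx_lt : ∀ j x, idx j x < N := by
    intro j x
    have hx : (x : ℕ) < n := x.2
    simp only [hidx]
    split_ifs <;> omega
  have idx_inj : ∀ j, Function.Injective (idx j) := by
    intro j x y hxy
    have hx : (x : ℕ) < n := x.2
    have hy : (y : ℕ) < n := y.2
    apply Fin.val_injective
    simp only [hidx] at hxy
    split_ifs at hxy <;> omega
  set a : Fin 2 → Fin n → Kt N := fun j x => - KtMono N {idx j x} with ha
  set c : Fin 2 → Kt N := fun j => (-1 : Kt N) ^ (j : ℕ) with hc
  set W : Fin 2 × Finset (Fin n) → Kt N := fun p => c p.1 * ∏ x ∈ p.2, (-(a p.1 x)) with hW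
  have hWeq : ∀ p : Fin 2 × Finset (Fin n),
      W p = (((-1 : ℚ) ^ (p.1 : ℕ) : ℚ) : Kt N) * KtMono N (p.2.image (idx p.1)) := by
    rintro ⟨j, s⟩
    have h1 : ∏ x ∈ s, (-(a j x)) = KtMono N (s.image (idx j)) := by
      rw [KtMono_prod, Finset.prod_image (fun x _ y _ hxy => idx_inj j hxy)]
      exact Finset.prod_congr rfl fun x _ => by simp [ha]
    show c j * ∏ x ∈ s, (-(a j x)) = _
    rw [h1, hc]
    push_cast
    ring
  set P : Fin 2 × Finset (Fin n) → Prop := fun p => ∀ x ∈ p.2, (x : ℕ) < r with hP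
  have supp_inj : ∀ p q : Fin 2 × Finset (Fin n), ¬ P p → ¬ P q →
      p.2.image (idx p.1) = q.2.image (idx q.1) → p = q := by
    rintro ⟨jp, sp⟩ ⟨jq, sq⟩ hp hq himg
    simp only [hP, not_forall] at hp hq
    obtain ⟨x, hxs, hxr⟩ := hp
    have hjj : jp = jq := by
      by_contra hne
      have hmem : idx jp x ∈ sq.image (idx jq) := by
        rw [← himg]; exact Finset.mem_image_of_mem _ hxs
      obtain ⟨y, hys, hyx⟩ := Finset.mem_image.1 hmem
      have hx2 : (x : ℕ) < n := x.2
      have hy2 : (y : ℕ) < n := y.2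
      have hf2 : ∀ u : Fin 2, u = 0 ∨ u = 1 := by decide
      rcases hf2 jp with hjp | hjp <;> rcases hf2 jq with hjq | hjq <;>
        first
          | (exact hne (hjp.trans hjq.symm))
          | (subst hjp; subst hjq;
             simp only [hidx, if_pos, if_neg, one_ne_zero, reduceIte] at hyx;
             split_ifs at hyx <;> omega)
    subst hjj
    have : sp = sq := Finset.image_injective (idx_inj jp) himg
    rw [this]
  have hrle : r ≤ n := by omega
  set R : Finset (Fin n) := (Finset.univ : Finset (Fin r)).map (Fin.castLEEmb hrle) with hR
  have hmemR : ∀ x : Fin n, x ∈ R ↔ (x : ℕ) < r := by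
    intro x
    simp only [hR, Finset.mem_map, Finset.mem_univ, true_and]
    constructor
    · rintro ⟨y, rfl⟩
      simpa using y.2
    · intro hx
      exact ⟨⟨(x : ℕ), hx⟩, by apply Fin.val_injective; rfl⟩
  have hcardR : R.card = r := by
    rw [hR, Finset.card_map, Finset.card_univ, Fintype.card_fin]
  set τ := {s : Finset (Fin n) // ∀ x ∈ s, (x : ℕ) < r} with hτ
  have hcardτ : Fintype.card τ = 2 ^ r := by
    have e1 : τ ≃ {s : Finset (Fin n) // s ∈ R.powerset} :=
      Equiv.subtypeEquivRight (by
        intro s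
        simp only [Finset.mem_powerset, Finset.subset_iff]
        constructor
        · intro hall u hu; exact (hmemR u).2 (hall u hu)
        · intro hsub u hu; exact (hmemR u).1 (hsub hu))
    rw [Fintype.card_congr e1, Fintype.card_coe, Finset.card_powerset, hcardR]
  have ePp : {p : Fin 2 × Finset (Fin n) // P p} ≃ Fin 2 × τ :=
    { toFun := fun p => (p.1.1, ⟨p.1.2, p.2⟩), invFun := fun q => ⟨(q.1, q.2.1), q.2.2⟩,
      left_inv := fun p => rfl, right_inv := fun q => rfl }
  have hcardIΦ : Fintype.card {p : Fin 2 × Finset (Fin n) // ¬ P p} = 2 ^ (n + 1) - 2 ^ i := by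
    rw [Fintype.card_subtype_compl, Fintype.card_congr ePp, Fintype.card_prod,
      Fintype.card_prod, Fintype.card_finset, Fintype.card_fin, Fintype.card_fin, hcardτ]
    have h1 : 2 ^ (n + 1) = 2 * 2 ^ n := by rw [pow_succ]; ring
    have h2 : 2 ^ i = 2 * 2 ^ r := by rw [← hri, pow_succ]; ring
    omega
  have eΦ : Fin (2 ^ (n + 1) - 2 ^ i) ≃ {p : Fin 2 × Finset (Fin n) // ¬ P p} :=
    Fintype.equivOfCardEq (by rw [Fintype.card_fin, hcardIΦ])
  set W₀ : {p : Fin 2 × Finset (Fin n) // ¬ P p} → Kt N := fun p => W p.1 with hW₀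
  refine ⟨weightedSumSquares (Kt N) (W₀ ∘ eΦ), ?_, ?_⟩
  · -- anisotropy
    intro x hx
    refine Kt_aniso N (Fin (2 ^ (n + 1) - 2 ^ i))
      (fun j => ((eΦ j).1.2).image (idx (eΦ j).1.1)) ?_ ?_
      (fun j => (-1 : ℚ) ^ (((eΦ j).1.1 : Fin 2) : ℕ)) ?_ x ?_
    · intro j m hm
      obtain ⟨u, _, rfl⟩ := Finset.mem_image.1 hm
      exact Finset.mem_range.2 (idx_lt _ _)
    · intro u v huv
      apply eΦ.injective
      apply Subtype.ext
      exact supp_inj _ _ (eΦ u).2 (eΦ v).2 huv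
    · intro j
      exact pow_ne_zero _ (by norm_num)
    · rw [← hx]
      show _ = weightedSumSquares (Kt N) (W₀ ∘ eΦ) x
      rw [weightedSumSquares_apply]
      refine Finset.sum_congr rfl fun j _ => ?_
      rw [smul_eq_mul]
      show ((((-1 : ℚ) ^ _ : ℚ)) : Kt N) * KtMono N _ * x j ^ 2 = W (eΦ j).1 * (x j * x j)
      rw [hWeq]
      ring
  · -- membership in I^n
    refine ⟨2, c, a, ?_, ?_, ?_⟩
    · intro j
      rw [hc]
      exact pow_ne_zero _ (neg_ne_zero.2 one_ne_zero)
    · intro j u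
      rw [ha]
      exact neg_ne_zero.2 (KtMono_ne_zero _ _)
    · refine ⟨2 ^ r, 0, ?_⟩
      have step4 : (weightedSumSquares (Kt N) (W₀ ∘ eΦ)).Equivalent
          (weightedSumSquares (Kt N) W₀) := wss_reindex eΦ W₀
      set W₁ : {p : Fin 2 × Finset (Fin n) // P p} → Kt N := fun p => W p.1 with hW₁
      set mτ : τ → Kt N := fun t => KtMono N (t.1.image (fun x : Fin n => (x : ℕ))) with hmτ
      let eτfin : Fin (2 ^ r) ≃ τ := Fintype.equivOfCardEq (by rw [Fintype.card_fin, hcardτ])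
      let eH : Fin (2 * 2 ^ r) ≃ τ × Fin 2 :=
        (finCongr (by ring)).trans ((finProdFinEquiv (m := 2 ^ r) (n := 2)).symm.trans
          (Equiv.prodCongr eτfin (Equiv.refl (Fin 2))))
      have hH : (fun q : τ × Fin 2 => (-1 : Kt N) ^ ((q.2 : Fin 2) : ℕ)) ∘ eH
          = fun u : Fin (2 * 2 ^ r) => (-1 : Kt N) ^ ((u : Fin (2 * 2 ^ r)) : ℕ) := by
        funext u
        show (-1 : Kt N) ^ (((eH u).2 : Fin 2) : ℕ) = _
        have h2 : (((eH u).2 : Fin 2) : ℕ) = (u : ℕ) % 2 := rfl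
        rw [h2, neg_one_pow_mod_two]
      have step5a : (hypForm (Kt N) (2 ^ r)).Equivalent
          (weightedSumSquares (Kt N) (fun q : τ × Fin 2 => (-1 : Kt N) ^ ((q.2 : Fin 2) : ℕ))) := by
        have h := wss_reindex eH (fun q : τ × Fin 2 => (-1 : Kt N) ^ ((q.2 : Fin 2) : ℕ))
        rw [hH] at h
        exact h
      have step5c := wss_bin_family (Kt_two_ne_zero N) mτ
        (fun t => by rw [hmτ]; exact KtMono_ne_zero _ _)
      let eστ : τ × Fin 2 ≃ {p : Fin 2 × Finset (Fin n) // P p} :=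
        { toFun := fun q => ⟨(q.2, q.1.1), q.1.2⟩, invFun := fun p => (⟨p.1.2, p.2⟩, p.1.1),
          left_inv := fun q => rfl, right_inv := fun p => rfl }
      have hcomp : W₁ ∘ eστ = fun q : τ × Fin 2 => mτ q.1 * (-1 : Kt N) ^ ((q.2 : Fin 2) : ℕ) := by
        funext q
        show W (q.2, q.1.1) = _
        rw [hWeq]
        have himg : (q.1.1).image (idx q.2) = (q.1.1).image (fun x : Fin n => (x : ℕ)) :=
          Finset.image_congr (fun x hx => by
            simp only [hidx]
            rw [if_pos (q.1.2 x hx)])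
        show _ * KtMono N ((q.1.1).image (idx q.2)) = _
        rw [himg, hmτ]
        push_cast
        ring
      have step5d : (weightedSumSquares (Kt N)
          (fun q : τ × Fin 2 => mτ q.1 * (-1 : Kt N) ^ ((q.2 : Fin 2) : ℕ))).Equivalent
          (weightedSumSquares (Kt N) W₁) := by
        have h := wss_reindex eστ W₁
        rw [hcomp] at h
        exact h
      have step5 : (hypForm (Kt N) (2 ^ r)).Equivalent (weightedSumSquares (Kt N) W₁) :=
        step5a.trans (step5c.trans step5d)
      have stepP := QuadraticMap.Equivalent.prod step4 step5
      have step3 := wss_prod_sum W₀ W₁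
      let EE : {p : Fin 2 × Finset (Fin n) // ¬ P p} ⊕ {p : Fin 2 × Finset (Fin n) // P p}
          ≃ Fin 2 × Finset (Fin n) :=
        (Equiv.sumComm _ _).trans (Equiv.sumCompl P)
      have hWE : W ∘ EE = Sum.elim W₀ W₁ := funext fun p => by cases p <;> rfl
      have step1 : (weightedSumSquares (Kt N) (Sum.elim W₀ W₁)).Equivalent
          (weightedSumSquares (Kt N) W) := by
        have h := wss_reindex EE W
        rw [hWE] at h
        exact h
      have hψ : pfisterScaledSum c a = weightedSumSquares (Kt N) W := rfl
      have final : ((weightedSumSquares (Kt N) (W₀ ∘ eΦ)).prod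
          (hypForm (Kt N) (2 ^ r))).Equivalent (pfisterScaledSum c a) := by
        rw [hψ]
        exact stepP.trans (step3.symm.trans step1)
      exact final.trans (prod_hyp_zero _ _)
end
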